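/- Let γ, ς ∈ ℝ with ς ≤ γ, let δ > 0, ε > 0, and let χ ≥ 1 be an integer. For 0 ≤ s ≤ χ, suppose η_s = x^{I_s}·α_s and h_s = x^{I_s}·H_s, where I_s ∈ ℤ_{≥0}^r satisfies ν(x^{I_s}) = ς − sδ, each α_s is a 0-final dominant logarithmic 1-form over R = k[[x,y]], each H_s ∈ R satisfies ν_A(H_s) ≥ ε, and H_0 = 0. Assume ν_A(Δ_s) ≥ 2γ for 1 ≤ s ≤ χ, where Δ_s = Σ_{i+j=s} (j·η_j ∧ η_i + h_i·dη_j + η_i ∧ dh_j). Then for each 1 ≤ s ≤ χ there exist a unit U_s ∈ R and a logarithmic 1-form α̃_s with ν_A(α̃_s) ≥ min{ε, δ} such that α_s = U_s·α_0 + α̃_s. -/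

import Mathlib

noncomputable section
open MvPowerSeries Classical

section Core

variable {k : Type} [Field k] {σ : Type}

/-- Weighted value of an exponent. -/
def wtG (W : σ → ℝ) (e : σ →₀ ℕ) : ℝ := e.sum fun i m => (m : ℝ) * W i

/-- Explicit value of a formal power series. -/
def nuG (W : σ → ℝ) (f : MvPowerSeries σ k) : EReal :=
  sInf {v : EReal | ∃ e : σ →₀ ℕ, MvPowerSeries.coeff (R := k) e f ≠ 0 ∧ v = ((wtG W e : ℝ) : EReal)}

/-- Derivative operators: `x·∂/∂x` for logarithmic variables, `∂/∂y` for plain ones. -/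
def DopG (isLog : σ → Bool) (b : σ) (f : MvPowerSeries σ k) : MvPowerSeries σ k :=
  fun e => if isLog b then (e b : k) * MvPowerSeries.coeff (R := k) e f
    else ((e b : k) + 1) * MvPowerSeries.coeff (R := k) (e + Finsupp.single b 1) f

/-- The differential of a function as a logarithmic 1-form. -/
def dFnG (isLog : σ → Bool) (f : MvPowerSeries σ k) : σ → MvPowerSeries σ k :=
  fun b => DopG isLog b f

/-- Explicit value of a logarithmic 1-form. -/
def nu1G (W : σ → ℝ) (ω : σ → MvPowerSeries σ k) : EReal := ⨅ b, nuG W (ω b)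

/-- Wedge of two 1-forms, as an alternating 2-tensor. -/
def w2G (α β : σ → MvPowerSeries σ k) : σ → σ → MvPowerSeries σ k :=
  fun a b => α a * β b - α b * β a

/-- Exterior derivative of a 1-form, as an alternating 2-tensor. -/
def dF1G (isLog : σ → Bool) (ω : σ → MvPowerSeries σ k) : σ → σ → MvPowerSeries σ k :=
  fun a b => DopG isLog a (ω b) - DopG isLog b (ω a)

/-- Explicit value of a 2-form. -/
def nu2G (W : σ → ℝ) (Ω : σ → σ → MvPowerSeries σ k) : EReal := ⨅ a, ⨅ b, nuG W (Ω a b)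

/-- Wedge of a 1-form with a 2-form, as an alternating 3-tensor. -/
def w12G (θ : σ → MvPowerSeries σ k) (Ω : σ → σ → MvPowerSeries σ k) :
    σ → σ → σ → MvPowerSeries σ k :=
  fun a b c => θ a * Ω b c - θ b * Ω a c + θ c * Ω a b

/-- Explicit value of a 3-form. -/
def nu3G (W : σ → ℝ) (T : σ → σ → σ → MvPowerSeries σ k) : EReal :=
  ⨅ a, ⨅ b, ⨅ c, nuG W (T a b c)

/-- `f` is dominant at its own explicit value: the value is realized by a monomial
purely in the distinguished (`isX`) variables. -/
def DomAtG (W : σ → ℝ) (isX : σ → Prop) (f : MvPowerSeries σ k) : Prop :=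
  ∃ e : σ →₀ ℕ, (∀ i, ¬ isX i → e i = 0) ∧ MvPowerSeries.coeff (R := k) e f ≠ 0 ∧
    ((wtG W e : ℝ) : EReal) = nuG W f

/-- `f` is `γ`-final dominant. -/
def FinalDomFnG (W : σ → ℝ) (isX : σ → Prop) (γ : ℝ) (f : MvPowerSeries σ k) : Prop :=
  nuG W f ≤ (γ : EReal) ∧ DomAtG W isX f

/-- A 1-form is dominant at its own explicit value: realized by a `dx_i/x_i`-coefficient. -/
def Dom1AtG (W : σ → ℝ) (isX : σ → Prop) (ω : σ → MvPowerSeries σ k) : Prop :=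
  ∃ i, isX i ∧ nuG W (ω i) = nu1G W ω ∧ DomAtG W isX (ω i)

/-- A 1-form is `γ`-final dominant. -/
def FinalDom1G (W : σ → ℝ) (isX : σ → Prop) (γ : ℝ) (ω : σ → MvPowerSeries σ k) : Prop :=
  nu1G W ω ≤ (γ : EReal) ∧ Dom1AtG W isX ω

-- characterization
theorem le_nuG_iff {W : σ → ℝ} {f : MvPowerSeries σ k} {C : EReal} :
    C ≤ nuG W f ↔ ∀ e : σ →₀ ℕ, MvPowerSeries.coeff (R := k) e f ≠ 0 → C ≤ ((wtG W e : ℝ) : EReal) := by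
  rw [nuG, le_sInf_iff]
  constructor
  · intro h e he
    exact h _ ⟨e, he, rfl⟩
  · rintro h v ⟨e, he, rfl⟩
    exact h e he

theorem wtG_nonneg {W : σ → ℝ} (hW : ∀ i, 0 ≤ W i) (e : σ →₀ ℕ) : 0 ≤ wtG W e :=
  Finset.sum_nonneg fun i _ => mul_nonneg (by positivity) (hW i)

theorem nuG_nonneg {W : σ → ℝ} (hW : ∀ i, 0 ≤ W i) (f : MvPowerSeries σ k) :
    (0 : EReal) ≤ nuG W f := by
  rw [le_nuG_iff]
  intro e _
  exact_mod_cast EReal.coe_nonneg.mpr (wtG_nonneg hW e)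

theorem wtG_add (W : σ → ℝ) (a b : σ →₀ ℕ) : wtG W (a + b) = wtG W a + wtG W b := by
  classical
  simp only [wtG]
  rw [Finsupp.sum_add_index]
  · intro i _; simp
  · intro i _ m1 m2; push_cast; ring

theorem nuG_add {W : σ → ℝ} {f g : MvPowerSeries σ k} {a : EReal}
    (hf : a ≤ nuG W f) (hg : a ≤ nuG W g) : a ≤ nuG W (f + g) := by
  rw [le_nuG_iff] at *
  intro e he
  rw [map_add] at he
  by_cases h1 : MvPowerSeries.coeff (R := k) e f = 0
  · exact hg e (by intro h2; rw [h1, h2, add_zero] at he; exact he rfl)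
  · exact hf e h1

theorem nuG_neg {W : σ → ℝ} {f : MvPowerSeries σ k} {a : EReal}
    (hf : a ≤ nuG W f) : a ≤ nuG W (-f) := by
  rw [le_nuG_iff] at *
  intro e he
  rw [map_neg] at he
  exact hf e (fun h => he (by rw [h, neg_zero]))

theorem nuG_sub {W : σ → ℝ} {f g : MvPowerSeries σ k} {a : EReal}
    (hf : a ≤ nuG W f) (hg : a ≤ nuG W g) : a ≤ nuG W (f - g) := by
  rw [sub_eq_add_neg]; exact nuG_add hf (nuG_neg hg)

theorem nuG_zero {W : σ → ℝ} {a : EReal} : a ≤ nuG W (0 : MvPowerSeries σ k) := by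
  rw [le_nuG_iff]; intro e he; simp at he

theorem nuG_sum {W : σ → ℝ} {a : EReal} {ι : Type*} (t : Finset ι)
    (F : ι → MvPowerSeries σ k) (h : ∀ i ∈ t, a ≤ nuG W (F i)) :
    a ≤ nuG W (∑ i ∈ t, F i) := by
  classical
  induction t using Finset.induction_on with
  | empty => simpa using nuG_zero
  | insert _ _ hni ih =>
    rw [Finset.sum_insert hni]
    exact nuG_add (h _ (Finset.mem_insert_self _ _))
      (ih fun i hi => h i (Finset.mem_insert_of_mem hi))

theorem nuG_mul {W : σ → ℝ} {f g : MvPowerSeries σ k} {a b : ℝ}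
    (hf : (a : EReal) ≤ nuG W f) (hg : (b : EReal) ≤ nuG W g) :
    ((a + b : ℝ) : EReal) ≤ nuG W (f * g) := by
  rw [le_nuG_iff] at *
  intro e he
  rw [MvPowerSeries.coeff_mul] at he
  obtain ⟨p, hp, hne⟩ := Finset.exists_ne_zero_of_sum_ne_zero he
  have h1 := hf p.1 (left_ne_zero_of_mul hne)
  have h2 := hg p.2 (right_ne_zero_of_mul hne)
  have hpe : p.1 + p.2 = e := (Finset.HasAntidiagonal.mem_antidiagonal).mp hp
  rw [← hpe, wtG_add]
  push_cast at *
  calc ((a : EReal) + b) ≤ (wtG W p.1 : ℝ) + (wtG W p.2 : ℝ) :=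
        add_le_add h1 h2
    _ = _ := by norm_cast

theorem nuG_monomial {W : σ → ℝ} (m : σ →₀ ℕ) :
    ((wtG W m : ℝ) : EReal) ≤ nuG W (MvPowerSeries.monomial (R := k) m (1 : k)) := by
  rw [le_nuG_iff]
  intro e he
  rw [MvPowerSeries.coeff_monomial] at he
  split at he
  · subst ‹e = m›; exact le_refl _
  · exact absurd rfl he

theorem nuG_of_monomial_mul {W : σ → ℝ} {f : MvPowerSeries σ k} {m : σ →₀ ℕ} {c : ℝ}
    (h : ((wtG W m + c : ℝ) : EReal) ≤ nuG W (MvPowerSeries.monomial (R := k) m (1 : k) * f)) :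
    (c : EReal) ≤ nuG W f := by
  rw [le_nuG_iff] at *
  intro e he
  have := h (m + e) (by rw [MvPowerSeries.coeff_add_monomial_mul, one_mul]; exact he)
  rw [wtG_add] at this
  have hr : wtG W m + c ≤ wtG W m + wtG W e := EReal.coe_le_coe_iff.mp this
  exact EReal.coe_le_coe_iff.mpr (by linarith)

theorem nuG_of_nsmul [CharZero k] {W : σ → ℝ} {f : MvPowerSeries σ k} {s : ℕ} (hs : s ≠ 0)
    {a : EReal} (h : a ≤ nuG W (s • f)) : a ≤ nuG W f := by
  rw [le_nuG_iff] at *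
  intro e he
  refine h e ?_
  rw [map_nsmul]
  simp only [nsmul_eq_mul]
  exact mul_ne_zero (Nat.cast_ne_zero.mpr hs) he

theorem wtG_single (W : σ → ℝ) (b : σ) : wtG W (Finsupp.single b 1) = W b := by
  rw [wtG, Finsupp.sum_single_index] <;> simp

theorem nuG_Dop [CharZero k] {W : σ → ℝ} (isLog : σ → Bool)
    (hW : ∀ b, isLog b = false → W b = 0) {f : MvPowerSeries σ k} {b : σ}
    {a : EReal} (h : a ≤ nuG W f) : a ≤ nuG W (DopG isLog b f) := by
  rw [le_nuG_iff] at *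
  intro e he
  have hco : MvPowerSeries.coeff (R := k) e (DopG isLog b f) = (DopG isLog b f) e := rfl
  rw [hco, DopG] at he
  by_cases hl : isLog b
  · rw [if_pos hl] at he
    exact h e (right_ne_zero_of_mul he)
  · rw [if_neg hl] at he
    have := h (e + Finsupp.single b 1) (right_ne_zero_of_mul he)
    rwa [wtG_add, wtG_single, hW b (by simpa using hl), add_zero] at this

theorem constantCoeff_eq_zero_of_nuG_pos {W : σ → ℝ} {f : MvPowerSeries σ k} {c : ℝ}
    (hc : 0 < c) (h : (c : EReal) ≤ nuG W f) : MvPowerSeries.constantCoeff (σ := σ) (R := k) f = 0 := by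
  by_contra hne
  rw [le_nuG_iff] at h
  have := h 0 (by rwa [← MvPowerSeries.coeff_zero_eq_constantCoeff] at hne)
  rw [show wtG W 0 = 0 by rw [wtG, Finsupp.sum_zero_index]] at this
  exact absurd (EReal.coe_le_coe_iff.mp this) (not_le.mpr hc)


theorem nuG_mono_const {W : σ → ℝ} {f : MvPowerSeries σ k} {a b : ℝ} (hab : b ≤ a)
    (h : (a : EReal) ≤ nuG W f) : (b : EReal) ≤ nuG W f :=
  le_trans (EReal.coe_le_coe_iff.mpr hab) h

theorem nuG_nsmul_ge {W : σ → ℝ} {f : MvPowerSeries σ k} {m : ℕ} {a : EReal}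
    (h : a ≤ nuG W f) : a ≤ nuG W (m • f) := by
  rw [le_nuG_iff] at *
  intro e he
  refine h e fun h0 => he ?_
  rw [map_nsmul, h0, smul_zero]

theorem wtG_fintype [Fintype σ] (W : σ → ℝ) (e : σ →₀ ℕ) :
    wtG W e = ∑ i, (e i : ℝ) * W i := by
  rw [wtG, Finsupp.sum_fintype]; intro i; simp


end Core

abbrev Idx (r n : ℕ) := Sum (Fin r) (Fin n)

/-- The constant logarithmic 1-form `Σᵢ μᵢ · dxᵢ/xᵢ`. -/
def cFormM {k : Type} [Field k] {r n : ℕ} (μ : Fin r → k) :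
    Idx r n → MvPowerSeries (Idx r n) k :=
  fun b => match b with
  | Sum.inl i => MvPowerSeries.C (σ := Idx r n) (R := k) (μ i)
  | Sum.inr _ => 0

/-- `d_μ f = f·Σ μᵢ dxᵢ/xᵢ + df`. -/
def dMuFn {k : Type} [Field k] {r n : ℕ} (μ : Fin r → k) (f : MvPowerSeries (Idx r n) k) :
    Idx r n → MvPowerSeries (Idx r n) k :=
  fun b => cFormM μ b * f + DopG (fun s => s.isLeft) b f

/-- `d_μ η = (Σ μᵢ dxᵢ/xᵢ) ∧ η + dη` on 1-forms. -/
def dMu1 {k : Type} [Field k] {r n : ℕ} (μ : Fin r → k)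
    (η : Idx r n → MvPowerSeries (Idx r n) k) :
    Idx r n → Idx r n → MvPowerSeries (Idx r n) k :=
  fun a b => w2G (cFormM μ) η a b + dF1G (fun s => s.isLeft) η a b

/-- The monomial `x^m`. -/
def xpowM {k : Type} [Field k] {r n : ℕ} (m : Fin r → ℕ) : MvPowerSeries (Idx r n) k :=
  MvPowerSeries.monomial (R := k) (Finsupp.equivFunOnFinite.symm (Sum.elim m fun _ => 0)) 1

/-- The logarithmic 1-form `x^m · Σᵢ λᵢ dxᵢ/xᵢ`. -/
def midForm {k : Type} [Field k] {r n : ℕ} (m : Fin r → ℕ) (lam : Fin r → k) :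
    Idx r n → MvPowerSeries (Idx r n) k :=
  fun b => match b with
  | Sum.inl i => MvPowerSeries.C (σ := Idx r n) (R := k) (lam i) * xpowM m
  | Sum.inr _ => 0

/-- `Δ_s = Σ_{i+j=s} (j·ηⱼ ∧ ηᵢ + hᵢ·dηⱼ + ηᵢ ∧ dhⱼ)`. -/
def DeltaL {k : Type} [Field k] {r n : ℕ} (eta : ℕ → Idx r n → MvPowerSeries (Idx r n) k)
    (h : ℕ → MvPowerSeries (Idx r n) k) (s : ℕ) :
    Idx r n → Idx r n → MvPowerSeries (Idx r n) k :=
  ∑ j ∈ Finset.range (s + 1),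
    (j • w2G (eta j) (eta (s - j)) +
      (fun a b => h (s - j) * dF1G (fun t => t.isLeft) (eta j) a b) +
      w2G (eta (s - j)) (dFnG (fun t => t.isLeft) (h j)))


section IdxLemmas

variable {k : Type} [Field k] {r n : ℕ}

theorem wt_xpowExp (w : Fin r → ℝ) (m : Fin r → ℕ) :
    wtG (Sum.elim w fun _ => (0:ℝ))
      ((Finsupp.equivFunOnFinite.symm (Sum.elim m fun _ : Fin n => 0)) : Idx r n →₀ ℕ)
      = ∑ i, (m i : ℝ) * w i := by
  rw [wtG_fintype, Fintype.sum_sum_type]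
  simp

theorem nuG_xpow (w : Fin r → ℝ) (m : Fin r → ℕ) :
    (((∑ i, (m i : ℝ) * w i : ℝ)) : EReal)
      ≤ nuG (Sum.elim w fun _ => (0:ℝ)) (xpowM (k := k) (n := n) m) := by
  have := nuG_monomial (k := k) (W := Sum.elim w fun _ => (0:ℝ))
    ((Finsupp.equivFunOnFinite.symm (Sum.elim m fun _ : Fin n => 0)) : Idx r n →₀ ℕ)
  rw [wt_xpowExp] at this
  exact this

theorem nuG_of_xpow_mul (w : Fin r → ℝ) (m : Fin r → ℕ)
    {f : MvPowerSeries (Idx r n) k} {c : ℝ}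
    (h : (((∑ i, (m i : ℝ) * w i) + c : ℝ) : EReal)
      ≤ nuG (Sum.elim w fun _ => (0:ℝ)) (xpowM m * f)) :
    (c : EReal) ≤ nuG (Sum.elim w fun _ => (0:ℝ)) f := by
  refine nuG_of_monomial_mul
    (m := (Finsupp.equivFunOnFinite.symm (Sum.elim m fun _ : Fin n => 0) : Idx r n →₀ ℕ)) ?_
  rw [wt_xpowExp]
  exact h

theorem exists_const_index (w : Fin r → ℝ) (hw : ∀ i, 0 < w i)
    {ω : Idx r n → MvPowerSeries (Idx r n) k}
    (h : FinalDom1G (Sum.elim w fun _ => (0:ℝ)) (fun t : Idx r n => t.isLeft = true) 0 ω) :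
    ∃ i : Idx r n, MvPowerSeries.constantCoeff (σ := Idx r n) (R := k) (ω i) ≠ 0 := by
  obtain ⟨hle, i, _, hval, e, hsupp, hco, hwt⟩ := h
  have hWnn : ∀ b : Idx r n, 0 ≤ Sum.elim w (fun _ => (0:ℝ)) b := by
    intro b; cases b with
    | inl i => exact (hw i).le
    | inr j => exact le_refl 0
  have h1 : ((wtG (Sum.elim w fun _ => (0:ℝ)) e : ℝ) : EReal) ≤ ((0:ℝ) : EReal) := by
    rw [hwt, hval]; exact_mod_cast hle
  have h2 : wtG (Sum.elim w fun _ => (0:ℝ)) e ≤ 0 := EReal.coe_le_coe_iff.mp h1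
  have h3 : wtG (Sum.elim w fun _ => (0:ℝ)) e = 0 :=
    le_antisymm h2 (wtG_nonneg hWnn e)
  rw [wtG_fintype] at h3
  have h4 : ∀ b : Idx r n, (e b : ℝ) * Sum.elim w (fun _ => (0:ℝ)) b = 0 := by
    intro b
    have := (Finset.sum_eq_zero_iff_of_nonneg
      (fun b _ => mul_nonneg (by positivity) (hWnn b))).mp h3
    exact this b (Finset.mem_univ b)
  have he0 : e = 0 := by
    ext b
    cases b with
    | inl i' =>
      have := h4 (Sum.inl i')
      simp only [Sum.elim_inl] at this
      have : (e (Sum.inl i') : ℝ) = 0 := by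
        rcases mul_eq_zero.mp this with h | h
        · exact h
        · exact absurd h (ne_of_gt (hw i'))
      exact_mod_cast this
    | inr j =>
      exact hsupp (Sum.inr j) (by simp)
  refine ⟨i, ?_⟩
  rw [← MvPowerSeries.coeff_zero_eq_constantCoeff, ← he0]
  exact hco

end IdxLemmas

/-- truncated proportionality of the levels `α_s` to `α_0`. -/
theorem statement14 {k : Type} [Field k] [CharZero k] {r n : ℕ} (hr : 0 < r)
    (w : Fin r → ℝ) (hw : ∀ i, 0 < w i) (hind : LinearIndependent ℚ w)
    (γ ς δ ε : ℝ) (hςγ : ς ≤ γ) (hδ : 0 < δ) (hε : 0 < ε)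
    (χ : ℕ) (hχ : 1 ≤ χ)
    (I : ℕ → Fin r → ℕ)
    (alpha : ℕ → Idx r n → MvPowerSeries (Idx r n) k)
    (H : ℕ → MvPowerSeries (Idx r n) k)
    (eta : ℕ → Idx r n → MvPowerSeries (Idx r n) k)
    (h : ℕ → MvPowerSeries (Idx r n) k)
    (heta : ∀ s ≤ χ, ∀ b, eta s b = xpowM (I s) * alpha s b)
    (hh : ∀ s ≤ χ, h s = xpowM (I s) * H s)
    (hI : ∀ s ≤ χ, (∑ i, (I s i : ℝ) * w i) = ς - s * δ)
    (halpha : ∀ s ≤ χ,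
      FinalDom1G (Sum.elim w fun _ => (0:ℝ)) (fun t => t.isLeft = true) 0 (alpha s))
    (hHval : ∀ s ≤ χ, (ε : EReal) ≤ nuG (Sum.elim w fun _ => (0:ℝ)) (H s))
    (hH0 : H 0 = 0)
    (hΔ : ∀ s, 1 ≤ s → s ≤ χ →
      ((2 * γ : ℝ) : EReal) ≤ nu2G (Sum.elim w fun _ => (0:ℝ)) (DeltaL eta h s)) :
    ∀ s, 1 ≤ s → s ≤ χ →
      ∃ (U : MvPowerSeries (Idx r n) k) (alphat : Idx r n → MvPowerSeries (Idx r n) k),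
        IsUnit U ∧
        ((min ε δ : ℝ) : EReal) ≤ nu1G (Sum.elim w fun _ => (0:ℝ)) alphat ∧
        ∀ b, alpha s b = U * alpha 0 b + alphat b := by
  classical
  set ρ : ℝ := min ε δ with hρdef
  have hρε : ρ ≤ ε := min_le_left _ _
  have hρδ : ρ ≤ δ := min_le_right _ _
  have hρpos : 0 < ρ := lt_min hε hδ
  have hWnn : ∀ b : Idx r n, 0 ≤ Sum.elim w (fun _ => (0:ℝ)) b := by
    intro b; cases b with
    | inl i => exact (hw i).le
    | inr j => exact le_refl 0
  have hWl : ∀ b : Idx r n, (fun t : Idx r n => t.isLeft) b = false →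
      Sum.elim w (fun _ => (0:ℝ)) b = 0 := by
    intro b hb
    cases b with
    | inl i => simp at hb
    | inr j => rfl
  have hnn : ∀ f : MvPowerSeries (Idx r n) k,
      ((0:ℝ) : EReal) ≤ nuG (Sum.elim w fun _ => (0:ℝ)) f := by
    intro f
    have := nuG_nonneg hWnn f
    exact_mod_cast this
  have mulr : ∀ (f g : MvPowerSeries (Idx r n) k) (c : ℝ),
      (c : EReal) ≤ nuG (Sum.elim w fun _ => (0:ℝ)) g →
      (c : EReal) ≤ nuG (Sum.elim w fun _ => (0:ℝ)) (f * g) := by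
    intro f g c hg
    exact nuG_mono_const (by linarith) (nuG_mul (hnn f) hg)
  have mull : ∀ (f g : MvPowerSeries (Idx r n) k) (c : ℝ),
      (c : EReal) ≤ nuG (Sum.elim w fun _ => (0:ℝ)) f →
      (c : EReal) ≤ nuG (Sum.elim w fun _ => (0:ℝ)) (f * g) := by
    intro f g c hf
    exact nuG_mono_const (by linarith) (nuG_mul hf (hnn g))
  have hνM : ∀ t, t ≤ χ → ((ς - (t:ℝ)*δ : ℝ) : EReal)
      ≤ nuG (Sum.elim w fun _ => (0:ℝ)) (xpowM (k := k) (n := n) (I t)) := by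
    intro t ht
    have := nuG_xpow (k := k) (n := n) w (I t)
    rwa [hI t ht] at this
  have hνη : ∀ t, t ≤ χ → ∀ c, ((ς - (t:ℝ)*δ : ℝ) : EReal)
      ≤ nuG (Sum.elim w fun _ => (0:ℝ)) (eta t c) := by
    intro t ht c
    rw [heta t ht c]
    exact mull _ _ _ (hνM t ht)
  have hνh : ∀ t, t ≤ χ → ((ς - (t:ℝ)*δ + ε : ℝ) : EReal)
      ≤ nuG (Sum.elim w fun _ => (0:ℝ)) (h t) := by
    intro t ht
    rw [hh t ht]
    exact nuG_mono_const (by linarith) (nuG_mul (hνM t ht) (hHval t ht))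
  have hνd : ∀ t, t ≤ χ → ∀ a b, ((ς - (t:ℝ)*δ : ℝ) : EReal)
      ≤ nuG (Sum.elim w fun _ => (0:ℝ)) (dF1G (fun t : Idx r n => t.isLeft) (eta t) a b) := by
    intro t ht a b
    simp only [dF1G]
    exact nuG_sub (nuG_Dop _ hWl (hνη t ht b)) (nuG_Dop _ hWl (hνη t ht a))
  have hνdh : ∀ t, t ≤ χ → ∀ c, ((ς - (t:ℝ)*δ + ε : ℝ) : EReal)
      ≤ nuG (Sum.elim w fun _ => (0:ℝ)) (dFnG (fun t : Idx r n => t.isLeft) (h t) c) := by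
    intro t ht c
    simp only [dFnG]
    exact nuG_Dop _ hWl (hνh t ht)
  obtain ⟨i₀, hc0⟩ := exists_const_index w hw (halpha 0 (Nat.zero_le _))
  have main : ∀ s, s ≤ χ → 1 ≤ s →
      ∃ (U : MvPowerSeries (Idx r n) k) (alphat : Idx r n → MvPowerSeries (Idx r n) k),
        IsUnit U ∧ (∀ c, (ρ : EReal) ≤ nuG (Sum.elim w fun _ => (0:ℝ)) (alphat c)) ∧
        ∀ b, alpha s b = U * alpha 0 b + alphat b := by
    intro s
    induction s using Nat.strong_induction_on with
    | _ s IH =>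
    intro hsχ hs1
    have hs1R : (1:ℝ) ≤ (s:ℝ) := by exact_mod_cast hs1
    have hsδ : δ ≤ (s:ℝ) * δ := le_mul_of_one_le_left hδ.le hs1R
    -- Step 1: the wedge bound
    have hwedge : ∀ a b : Idx r n, (ρ : EReal)
        ≤ nuG (Sum.elim w fun _ => (0:ℝ)) (w2G (alpha s) (alpha 0) a b) := by
      intro a b
      have hGj : ∀ j ∈ Finset.range s, ((2*ς - (s:ℝ)*δ + ρ : ℝ) : EReal)
          ≤ nuG (Sum.elim w fun _ => (0:ℝ))
            (j • w2G (eta j) (eta (s - j)) a b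
              + h (s - j) * dF1G (fun t : Idx r n => t.isLeft) (eta j) a b
              + w2G (eta (s - j)) (dFnG (fun t : Idx r n => t.isLeft) (h j)) a b) := by
        intro j hj
        have hjs : j < s := Finset.mem_range.mp hj
        have hjχ : j ≤ χ := le_trans hjs.le hsχ
        have hsjχ : s - j ≤ χ := le_trans (Nat.sub_le s j) hsχ
        have hcastj : ((s - j : ℕ) : ℝ) = (s : ℝ) - (j : ℝ) := by
          exact_mod_cast Nat.cast_sub hjs.le
        refine nuG_add (nuG_add ?_ ?_) ?_
        · rcases Nat.eq_zero_or_pos j with hj0 | hj1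
          · subst hj0; rw [zero_smul]; exact nuG_zero
          · obtain ⟨U₁, A, _, hA, hdec₁⟩ := IH j hjs hjχ hj1
            obtain ⟨U₂, B, _, hB, hdec₂⟩ := IH (s - j) (by omega) hsjχ (by omega)
            have hw2 : (ρ : EReal)
                ≤ nuG (Sum.elim w fun _ => (0:ℝ)) (w2G (alpha j) (alpha (s - j)) a b) := by
              have heq : w2G (alpha j) (alpha (s - j)) a b =
                  U₁ * alpha 0 a * B b + A a * (U₂ * alpha 0 b) + A a * B b
                  - (U₁ * alpha 0 b * B a + A b * (U₂ * alpha 0 a) + A b * B a) := by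
                simp only [w2G]
                rw [hdec₁ a, hdec₁ b, hdec₂ a, hdec₂ b]
                ring
              rw [heq]
              exact nuG_sub
                (nuG_add (nuG_add (mulr _ _ _ (hB b)) (mull _ _ _ (hA a))) (mull _ _ _ (hA a)))
                (nuG_add (nuG_add (mulr _ _ _ (hB a)) (mull _ _ _ (hA b))) (mull _ _ _ (hA b)))
            have heqM : w2G (eta j) (eta (s - j)) a b =
                xpowM (I j) * (xpowM (I (s - j)) * w2G (alpha j) (alpha (s - j)) a b) := by
              simp only [w2G]
              rw [heta j hjχ a, heta j hjχ b, heta (s - j) hsjχ a, heta (s - j) hsjχ b]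
              ring
            refine nuG_nsmul_ge ?_
            rw [heqM]
            refine nuG_mono_const ?_ (nuG_mul (hνM j hjχ) (nuG_mul (hνM (s - j) hsjχ) hw2))
            rw [hcastj]
            linarith
        · refine nuG_mono_const ?_ (nuG_mul (hνh (s - j) hsjχ) (hνd j hjχ a b))
          rw [hcastj]
          linarith
        · simp only [w2G]
          refine nuG_mono_const ?_
            (nuG_sub (nuG_mul (hνη (s - j) hsjχ a) (hνdh j hjχ b))
              (nuG_mul (hνη (s - j) hsjχ b) (hνdh j hjχ a)))
          rw [hcastj]
          linarith
      have hRest : ((2*ς - (s:ℝ)*δ + ρ : ℝ) : EReal)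
          ≤ nuG (Sum.elim w fun _ => (0:ℝ))
            (DeltaL eta h s a b - s • w2G (eta s) (eta 0) a b) := by
        have hre : DeltaL eta h s a b - s • w2G (eta s) (eta 0) a b =
            (∑ j ∈ Finset.range s,
              (j • w2G (eta j) (eta (s - j)) a b
                + h (s - j) * dF1G (fun t : Idx r n => t.isLeft) (eta j) a b
                + w2G (eta (s - j)) (dFnG (fun t : Idx r n => t.isLeft) (h j)) a b))
            + (h 0 * dF1G (fun t : Idx r n => t.isLeft) (eta s) a b
                + w2G (eta 0) (dFnG (fun t : Idx r n => t.isLeft) (h s)) a b) := by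
          simp only [DeltaL, Finset.sum_apply, Pi.add_apply, Pi.smul_apply,
            Finset.sum_range_succ, Nat.sub_self]
          abel
        rw [hre]
        refine nuG_add (nuG_sum _ _ hGj) (nuG_add ?_ ?_)
        · refine nuG_mono_const ?_ (nuG_mul (hνh 0 (Nat.zero_le _)) (hνd s hsχ a b))
          push_cast
          linarith
        · simp only [w2G]
          refine nuG_mono_const ?_
            (nuG_sub (nuG_mul (hνη 0 (Nat.zero_le _) a) (hνdh s hsχ b))
              (nuG_mul (hνη 0 (Nat.zero_le _) b) (hνdh s hsχ a)))
          push_cast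
          linarith
      have hΔab : ((2*ς - (s:ℝ)*δ + ρ : ℝ) : EReal)
          ≤ nuG (Sum.elim w fun _ => (0:ℝ)) (DeltaL eta h s a b) := by
        have h2 : nu2G (Sum.elim w fun _ => (0:ℝ)) (DeltaL eta h s)
            ≤ nuG (Sum.elim w fun _ => (0:ℝ)) (DeltaL eta h s a b) := by
          simp only [nu2G]
          exact le_trans (iInf_le _ a) (iInf_le _ b)
        exact nuG_mono_const (by linarith) (le_trans (hΔ s hs1 hsχ) h2)
      have hsmul : ((2*ς - (s:ℝ)*δ + ρ : ℝ) : EReal)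
          ≤ nuG (Sum.elim w fun _ => (0:ℝ)) (s • w2G (eta s) (eta 0) a b) := by
        have heq2 : s • w2G (eta s) (eta 0) a b
            = DeltaL eta h s a b - (DeltaL eta h s a b - s • w2G (eta s) (eta 0) a b) :=
          (sub_sub_cancel _ _).symm
        rw [heq2]
        exact nuG_sub hΔab hRest
      have hstrip := nuG_of_nsmul (by omega) hsmul
      have heqMain : w2G (eta s) (eta 0) a b =
          xpowM (I s) * (xpowM (I 0) * w2G (alpha s) (alpha 0) a b) := by
        simp only [w2G]
        rw [heta s hsχ a, heta s hsχ b, heta 0 (Nat.zero_le _) a, heta 0 (Nat.zero_le _) b]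
        ring
      rw [heqMain] at hstrip
      have step1 : ((ς + ρ : ℝ) : EReal)
          ≤ nuG (Sum.elim w fun _ => (0:ℝ)) (xpowM (I 0) * w2G (alpha s) (alpha 0) a b) := by
        refine nuG_of_xpow_mul w (I s) (nuG_mono_const ?_ hstrip)
        rw [hI s hsχ]
        linarith
      refine nuG_of_xpow_mul w (I 0) (nuG_mono_const ?_ step1)
      rw [hI 0 (Nat.zero_le _)]
      push_cast
      linarith
    -- Step 2: building the unit and the remainder
    obtain ⟨iS, hcs⟩ := exists_const_index w hw (halpha s hsχ)
    have hkey : MvPowerSeries.constantCoeff (σ := Idx r n) (R := k) (w2G (alpha s) (alpha 0) iS i₀) = 0 :=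
      constantCoeff_eq_zero_of_nuG_pos hρpos (hwedge iS i₀)
    simp only [w2G, map_sub, map_mul, sub_eq_zero] at hkey
    have hcsi0 : MvPowerSeries.constantCoeff (σ := Idx r n) (R := k) (alpha s i₀) ≠ 0 := by
      intro hzero
      rw [hzero, zero_mul] at hkey
      exact mul_ne_zero hcs hc0 hkey
    have hU : IsUnit (alpha s i₀) :=
      MvPowerSeries.isUnit_iff_constantCoeff.mpr (isUnit_iff_ne_zero.mpr hcsi0)
    have hU0 : IsUnit (alpha 0 i₀) :=
      MvPowerSeries.isUnit_iff_constantCoeff.mpr (isUnit_iff_ne_zero.mpr hc0)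
    refine ⟨alpha s i₀ * ↑hU0.unit⁻¹,
      fun b => alpha s b - (alpha s i₀ * ↑hU0.unit⁻¹) * alpha 0 b,
      hU.mul (Units.isUnit _), ?_, fun b => by ring⟩
    intro c
    have hvp : (↑hU0.unit⁻¹ : MvPowerSeries (Idx r n) k) * alpha 0 i₀ = 1 :=
      hU0.val_inv_mul
    have heq : alpha s c - (alpha s i₀ * ↑hU0.unit⁻¹) * alpha 0 c
        = ↑hU0.unit⁻¹ * w2G (alpha s) (alpha 0) c i₀ := by
      simp only [w2G]
      linear_combination (-(alpha s c)) * hvp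
    show (ρ : EReal) ≤ nuG (Sum.elim w fun _ => (0:ℝ))
      (alpha s c - alpha s i₀ * (↑hU0.unit⁻¹ : MvPowerSeries (Idx r n) k) * alpha 0 c)
    rw [mul_assoc] at heq ⊢
    rw [heq]
    exact mulr _ _ _ (hwedge c i₀)
  intro s hs1 hsχ
  obtain ⟨U, alphat, hUu, hval, hdec⟩ := main s hsχ hs1
  refine ⟨U, alphat, hUu, ?_, hdec⟩
  simp only [nu1G]
  exact le_iInf hval
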